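/- Let n ≥ 2, let α ∈ [0,1], let C, D ∈ ℝ^{n×n} be symmetric, let M ∈ ℝ^{n×n}, and fix V ∈ ℝ^{n×(n−1)} with Vᵀ·1 = 0 and Vᵀ V = I_{n−1}; write M̂ := Vᵀ M V. Define the orthogonal fused Gromov–Wasserstein discrepancy OFGW(C,D,M;α) := (α/n²)(‖C‖_F² + ‖D‖_F²) − (1/n²)·sup_{P ∈ O_n ∩ E_n} [ 2α·tr(C P D Pᵀ) − (1−α)·tr(Mᵀ P) ], where O_n := {P ∈ ℝ^{n×n} : Pᵀ P = I} and E_n := {P ∈ ℝ^{n×n} : P·1 = Pᵀ·1 = 1}. If 1ᵀ M 1 ≥ n·‖M̂‖_*, where ‖·‖_* denotes the trace norm (sum of singular values), then OFGW(C,D,M;α) ≥ 0. Moreover, when M = 0, OFGW(C,D,0;α) = α·OGW(C,D) with OGW(C,D) := (1/n²)(‖C‖_F² + ‖D‖_F² − 2·sup_{P ∈ O_n ∩ E_n} tr(C P D Pᵀ)). -/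

import Mathlib

open Matrix BigOperators
open Pointwise

noncomputable section

/-- Squared Frobenius norm of a real matrix. -/
def frobSq {m n : ℕ} (A : Matrix (Fin m) (Fin n) ℝ) : ℝ := ∑ i, ∑ j, (A i j) ^ 2

/-- Euclidean norm of a real vector. -/
def vnorm {n : ℕ} (v : Fin n → ℝ) : ℝ := Real.sqrt (∑ i, (v i) ^ 2)

/-- Eigenvalues of a real symmetric (Hermitian) matrix, listed in descending order. -/
def eigDesc {n : ℕ} {A : Matrix (Fin n) (Fin n) ℝ} (hA : A.IsHermitian) : Fin n → ℝ :=
  fun i => (hA.eigenvalues ∘ Tuple.sort hA.eigenvalues) i.rev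

/-- Conjugating a real symmetric (Hermitian) matrix preserves symmetry. -/
theorem conjHerm {n m : ℕ} (V : Matrix (Fin n) (Fin m) ℝ) {C : Matrix (Fin n) (Fin n) ℝ}
    (hC : C.IsHermitian) : (Vᵀ * C * V).IsHermitian := by
  have h := Matrix.isHermitian_mul_mul_conjTranspose Vᵀ hC
  simpa using h


/-- The set `O_n ∩ E_n` of orthogonal matrices whose row and column sums all equal `1`. -/
def OE (n : ℕ) : Set (Matrix (Fin n) (Fin n) ℝ) :=
  {P | Pᵀ * P = 1 ∧ (P *ᵥ (fun _ => (1 : ℝ)) = fun _ => 1)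
    ∧ (Pᵀ *ᵥ (fun _ => (1 : ℝ)) = fun _ => 1)}

/-- The orthogonal Gromov-Wasserstein discrepancy `OGW`. -/
def OGW (n : ℕ) (C D : Matrix (Fin n) (Fin n) ℝ) : ℝ :=
  (1 / (n : ℝ) ^ 2) * (frobSq C + frobSq D
    - 2 * sSup ((fun P => Matrix.trace (C * P * D * Pᵀ)) '' (OE n)))


/-- The trace (nuclear) norm of a real matrix: the sum of its singular values. -/
def traceNorm {k l : ℕ} (X : Matrix (Fin k) (Fin l) ℝ) : ℝ :=
  ∑ i, Real.sqrt ((Matrix.isHermitian_conjTranspose_mul_self X).eigenvalues i)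

/-- The orthogonal fused Gromov-Wasserstein discrepancy `OFGW`. -/
def OFGW (n : ℕ) (α : ℝ) (C D M : Matrix (Fin n) (Fin n) ℝ) : ℝ :=
  (α / (n : ℝ) ^ 2) * (frobSq C + frobSq D)
    - (1 / (n : ℝ) ^ 2) * sSup ((fun P =>
        2 * α * Matrix.trace (C * P * D * Pᵀ)
          - (1 - α) * Matrix.trace (Mᵀ * P)) '' (OE n))

/- ===================== Auxiliary lemmas ===================== -/

lemma trace_transpose_mul_eq {k l : ℕ} (A B : Matrix (Fin k) (Fin l) ℝ) :
    Matrix.trace (Aᵀ * B) = ∑ i, ∑ j, A j i * B j i := by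
  simp [Matrix.trace, Matrix.diag, Matrix.mul_apply, Matrix.transpose_apply]

lemma frobSq_nonneg {m n : ℕ} (A : Matrix (Fin m) (Fin n) ℝ) : 0 ≤ frobSq A := by
  apply Finset.sum_nonneg; intro i _; apply Finset.sum_nonneg; intro j _; positivity

lemma frobSq_eq_trace {n : ℕ} (A : Matrix (Fin n) (Fin n) ℝ) :
    frobSq A = Matrix.trace (Aᵀ * A) := by
  rw [trace_transpose_mul_eq, frobSq, Finset.sum_comm]
  simp [pow_two]

lemma frob_inner_le {n : ℕ} (A B : Matrix (Fin n) (Fin n) ℝ) :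
    Matrix.trace (Aᵀ * B) ≤ (frobSq A + frobSq B) / 2 := by
  have key : Matrix.trace (Aᵀ * B) ≤ Real.sqrt (frobSq A) * Real.sqrt (frobSq B) := by
    rw [trace_transpose_mul_eq]
    have hre : ∀ (X : Matrix (Fin n) (Fin n) ℝ), ∑ i, ∑ j, X j i * X j i = frobSq X := by
      intro X; rw [frobSq, Finset.sum_comm]; simp [pow_two]
    calc ∑ i, ∑ j, A j i * B j i
        = ∑ p : Fin n × Fin n, A p.2 p.1 * B p.2 p.1 := by
          rw [Fintype.sum_prod_type]
      _ ≤ Real.sqrt (frobSq A) * Real.sqrt (frobSq B) := by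
          have hcs := Finset.sum_mul_sq_le_sq_mul_sq Finset.univ
            (fun p : Fin n × Fin n => A p.2 p.1) (fun p : Fin n × Fin n => B p.2 p.1)
          have hA : ∑ p : Fin n × Fin n, A p.2 p.1 ^ 2 = frobSq A := by
            rw [← hre A, Fintype.sum_prod_type]; simp [pow_two]
          have hB : ∑ p : Fin n × Fin n, B p.2 p.1 ^ 2 = frobSq B := by
            rw [← hre B, Fintype.sum_prod_type]; simp [pow_two]
          rw [hA, hB] at hcs
          calc ∑ p : Fin n × Fin n, A p.2 p.1 * B p.2 p.1
              ≤ |∑ p : Fin n × Fin n, A p.2 p.1 * B p.2 p.1| := le_abs_self _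
            _ = Real.sqrt ((∑ p : Fin n × Fin n, A p.2 p.1 * B p.2 p.1) ^ 2) :=
                (Real.sqrt_sq_eq_abs _).symm
            _ ≤ Real.sqrt (frobSq A * frobSq B) := Real.sqrt_le_sqrt hcs
            _ = Real.sqrt (frobSq A) * Real.sqrt (frobSq B) :=
                Real.sqrt_mul (frobSq_nonneg A) _
  have h2 := two_mul_le_add_sq (Real.sqrt (frobSq A)) (Real.sqrt (frobSq B))
  rw [Real.sq_sqrt (frobSq_nonneg A), Real.sq_sqrt (frobSq_nonneg B)] at h2
  nlinarith [key]

/-- von Neumann-type bound: `tr(AᵀQ) ≤ ‖A‖_*` when `Q` has orthonormal columns. -/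
lemma vonNeumann {k l : ℕ} (A : Matrix (Fin k) (Fin l) ℝ) (Q : Matrix (Fin k) (Fin l) ℝ)
    (hQ : Qᵀ * Q = 1) : Matrix.trace (Aᵀ * Q) ≤ traceNorm A := by
  classical
  have hH := Matrix.isHermitian_conjTranspose_mul_self A
  set U : Matrix (Fin l) (Fin l) ℝ :=
    (Matrix.IsHermitian.eigenvectorUnitary hH : Matrix (Fin l) (Fin l) ℝ) with hUdef
  have hU1 : star U * U = 1 := (Matrix.IsHermitian.eigenvectorUnitary hH).2.1
  have hU2 : U * star U = 1 := (Matrix.IsHermitian.eigenvectorUnitary hH).2.2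
  have hstar : star U = Uᵀ := by
    rw [Matrix.star_eq_conjTranspose, Matrix.conjTranspose_eq_transpose_of_trivial]
  rw [hstar] at hU1 hU2
  have hAt : Aᴴ = Aᵀ := Matrix.conjTranspose_eq_transpose_of_trivial A
  have hspec : Aᵀ * A = U * Matrix.diagonal hH.eigenvalues * Uᵀ := by
    have := hH.spectral_theorem
    rw [Unitary.conjStarAlgAut_apply, ← hUdef, hstar] at this
    rw [← hAt]
    simpa using this
  set B := A * U with hB
  set R := Q * U with hR
  have hBB : Bᵀ * B = Matrix.diagonal hH.eigenvalues := by
    have : Bᵀ * B = Uᵀ * (Aᵀ * A) * U := by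
      rw [hB, Matrix.transpose_mul]
      simp [Matrix.mul_assoc]
    rw [this, hspec]
    calc Uᵀ * (U * Matrix.diagonal hH.eigenvalues * Uᵀ) * U
        = (Uᵀ * U) * Matrix.diagonal hH.eigenvalues * (Uᵀ * U) := by
          simp [Matrix.mul_assoc]
      _ = Matrix.diagonal hH.eigenvalues := by rw [hU1, one_mul, mul_one]
  have hRR : Rᵀ * R = 1 := by
    have : Rᵀ * R = Uᵀ * (Qᵀ * Q) * U := by rw [hR, Matrix.transpose_mul]; simp [Matrix.mul_assoc]
    rw [this, hQ, mul_one, hU1]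
  have htr : Matrix.trace (Aᵀ * Q) = Matrix.trace (Bᵀ * R) := by
    have h1 : Bᵀ * R = Uᵀ * ((Aᵀ * Q) * U) := by
      rw [hB, hR, Matrix.transpose_mul]; simp [Matrix.mul_assoc]
    rw [h1, Matrix.trace_mul_comm (Uᵀ) ((Aᵀ * Q) * U), Matrix.mul_assoc, hU2, mul_one]
  have hcolB : ∀ i, ∑ j, (B j i) ^ 2 = hH.eigenvalues i := by
    intro i
    have := congrArg (fun X => X i i) hBB
    simpa [trace_transpose_mul_eq, Matrix.mul_apply, Matrix.transpose_apply, pow_two] using this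
  have hcolR : ∀ i, ∑ j, (R j i) ^ 2 = 1 := by
    intro i
    have := congrArg (fun X => X i i) hRR
    simpa [Matrix.mul_apply, Matrix.transpose_apply, Matrix.one_apply, pow_two] using this
  rw [htr, trace_transpose_mul_eq]
  unfold traceNorm
  apply Finset.sum_le_sum
  intro i _
  have hcs := Finset.sum_mul_sq_le_sq_mul_sq Finset.univ (fun j => B j i) (fun j => R j i)
  rw [hcolB, hcolR, mul_one] at hcs
  calc ∑ j, B j i * R j i ≤ |∑ j, B j i * R j i| := le_abs_self _
    _ = Real.sqrt ((∑ j, B j i * R j i) ^ 2) := (Real.sqrt_sq_eq_abs _).symm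
    _ ≤ Real.sqrt (hH.eigenvalues i) := Real.sqrt_le_sqrt hcs

abbrev onesM (n : ℕ) : Matrix (Fin n) (Fin n) ℝ := Matrix.of fun _ _ => (1 : ℝ)

lemma colsum_zero {n : ℕ} {V : Matrix (Fin n) (Fin (n - 1)) ℝ}
    (hV1 : Vᵀ *ᵥ (fun _ => (1 : ℝ)) = 0) (j : Fin (n-1)) : ∑ i, V i j = 0 := by
  have := congrFun hV1 j
  simpa [Matrix.mulVec, dotProduct] using this

lemma VVt_eq (n : ℕ) (hn : 2 ≤ n) (V : Matrix (Fin n) (Fin (n - 1)) ℝ)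
    (hV1 : Vᵀ *ᵥ (fun _ => (1 : ℝ)) = 0) (hV2 : Vᵀ * V = 1) :
    V * Vᵀ = 1 - ((n : ℝ)⁻¹) • onesM n := by
  have hn0 : (0:ℝ) < (n:ℝ) := by
    have : 0 < n := by omega
    exact_mod_cast this
  set u : Matrix (Fin n) (Fin 1) ℝ := Matrix.of (fun _ _ => 1 / Real.sqrt n) with hu
  have hsq : Real.sqrt n * Real.sqrt n = n := Real.mul_self_sqrt (le_of_lt hn0)
  have hsqn : Real.sqrt n ≠ 0 := by positivity
  have huu : uᵀ * u = 1 := by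
    ext i j
    fin_cases i; fin_cases j
    simp [hu, Matrix.mul_apply, Matrix.one_apply, Finset.sum_const, Finset.card_univ]
    rw [← mul_inv, hsq, mul_inv_cancel₀ (ne_of_gt hn0)]
  have huV : uᵀ * V = 0 := by
    ext i j
    simp only [hu, Matrix.mul_apply, Matrix.transpose_apply, Matrix.of_apply,
      Matrix.zero_apply, one_div]
    rw [← Finset.mul_sum, colsum_zero hV1 j, mul_zero]
  have hVu : Vᵀ * u = 0 := by
    ext i j
    simp only [hu, Matrix.mul_apply, Matrix.transpose_apply, Matrix.of_apply,
      Matrix.zero_apply, one_div]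
    rw [← Finset.sum_mul, colsum_zero hV1 i, zero_mul]
  have e : Fin n ≃ Fin 1 ⊕ Fin (n - 1) :=
    (finCongr (show n = 1 + (n - 1) by omega)).trans finSumFinEquiv.symm
  have hone : Matrix.fromRows uᵀ Vᵀ * Matrix.fromCols u V = 1 := by
    rw [Matrix.fromRows_mul_fromCols, huu, huV, hVu, hV2, Matrix.fromBlocks_one]
  have hcomp : u * uᵀ + V * Vᵀ = 1 := by
    have := (Matrix.fromCols_mul_fromRows_eq_one_comm e u V uᵀ Vᵀ).mpr hone
    rwa [Matrix.fromCols_mul_fromRows] at this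
  have huut : u * uᵀ = ((n : ℝ)⁻¹) • onesM n := by
    ext i j
    simp [hu, Matrix.mul_apply, Matrix.smul_apply]
    rw [← mul_inv, hsq]
  rw [huut] at hcomp
  exact eq_sub_of_add_eq' hcomp

lemma P_decomp {n : ℕ} (hn : 2 ≤ n) {V : Matrix (Fin n) (Fin (n - 1)) ℝ}
    (hV1 : Vᵀ *ᵥ (fun _ => (1 : ℝ)) = 0) (hV2 : Vᵀ * V = 1)
    (hVV : V * Vᵀ = 1 - ((n : ℝ)⁻¹) • onesM n)
    {P : Matrix (Fin n) (Fin n) ℝ} (hO : Pᵀ * P = 1)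
    (h1 : P *ᵥ (fun _ => (1 : ℝ)) = fun _ => 1)
    (h2 : Pᵀ *ᵥ (fun _ => (1 : ℝ)) = fun _ => 1) :
    (Vᵀ * P * V)ᵀ * (Vᵀ * P * V) = 1
      ∧ P = ((n : ℝ)⁻¹) • onesM n + V * (Vᵀ * P * V) * Vᵀ := by
  have hn0 : (0:ℝ) < (n:ℝ) := by
    have : 0 < n := by omega
    exact_mod_cast this
  set c : ℝ := (n:ℝ)⁻¹ with hc
  set K : Matrix (Fin n) (Fin n) ℝ := onesM n with hK
  have hrow : ∀ i, ∑ j, P i j = 1 := fun i => by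
    have := congrFun h1 i; simpa [Matrix.mulVec, dotProduct] using this
  have hcol : ∀ j, ∑ i, P i j = 1 := fun j => by
    have := congrFun h2 j; simpa [Matrix.mulVec, dotProduct] using this
  have hKP : K * P = K := by
    ext i j; simp [hK, Matrix.mul_apply, hcol j]
  have hPK : P * K = K := by
    ext i j; simp [hK, Matrix.mul_apply, hrow i]
  have hPtK : Pᵀ * K = K := by
    ext i j; simp [hK, Matrix.mul_apply, hcol i]
  have hVtK : Vᵀ * K = 0 := by
    ext i j; simp [hK, Matrix.mul_apply, colsum_zero hV1 i]
  have hKV : K * V = 0 := by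
    ext i j; simp [hK, Matrix.mul_apply, colsum_zero hV1 j]
  have hKK : K * K = (n:ℝ) • K := by
    ext i j
    simp [hK, Matrix.mul_apply, Finset.sum_const, Finset.card_univ]
  have hTQ : (Vᵀ * P * V)ᵀ = Vᵀ * Pᵀ * V := by
    simp [Matrix.transpose_mul, Matrix.mul_assoc]
  have hmid : Pᵀ * (V * Vᵀ) * P = 1 - c • K := by
    rw [hVV, Matrix.mul_sub, Matrix.mul_one, Matrix.mul_smul, hPtK,
      Matrix.sub_mul, hO, Matrix.smul_mul, hKP]
  constructor
  · have hassoc : (Vᵀ * Pᵀ * V) * (Vᵀ * P * V) = Vᵀ * (Pᵀ * (V * Vᵀ) * P) * V := by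
      simp only [Matrix.mul_assoc]
    rw [hTQ, hassoc, hmid, Matrix.mul_sub, Matrix.mul_one, Matrix.mul_smul, hVtK,
      smul_zero, sub_zero, hV2]
  · have hassoc : V * (Vᵀ * P * V) * Vᵀ = (V * Vᵀ) * P * (V * Vᵀ) := by
      simp only [Matrix.mul_assoc]
    have step1 : (V * Vᵀ) * P = P - c • K := by
      rw [hVV, Matrix.sub_mul, Matrix.one_mul, Matrix.smul_mul, hKP]
    have step2 : (P - c • K) * (V * Vᵀ) = P - c • K := by
      rw [hVV, Matrix.mul_sub, Matrix.mul_one, Matrix.sub_mul, Matrix.mul_smul, hPK,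
        Matrix.smul_mul, Matrix.mul_smul, hKK]
      rw [smul_smul, smul_smul]
      have h3 : c * c * (n:ℝ) = c := by
        rw [hc]; field_simp
      rw [h3]
      abel
    rw [hassoc, step1, step2]
    abel

/-- Key positivity: `tr(MᵀP) ≥ 0` for `P ∈ OE n`, under the trace-norm hypothesis. -/
lemma trace_M_nonneg {n : ℕ} (hn : 2 ≤ n) {V : Matrix (Fin n) (Fin (n - 1)) ℝ}
    (hV1 : Vᵀ *ᵥ (fun _ => (1 : ℝ)) = 0) (hV2 : Vᵀ * V = 1)
    (M : Matrix (Fin n) (Fin n) ℝ)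
    (hM : (n : ℝ) * traceNorm (Vᵀ * M * V) ≤ ∑ i, ∑ j, M i j)
    {P : Matrix (Fin n) (Fin n) ℝ} (hP : P ∈ OE n) :
    0 ≤ Matrix.trace (Mᵀ * P) := by
  obtain ⟨hO, h1, h2⟩ := hP
  have hn0 : (0:ℝ) < (n:ℝ) := by
    have : 0 < n := by omega
    exact_mod_cast this
  have hVV := VVt_eq n hn V hV1 hV2
  obtain ⟨hQO, hdec⟩ := P_decomp hn hV1 hV2 hVV hO h1 h2
  set Q := Vᵀ * P * V with hQ
  set c : ℝ := (n:ℝ)⁻¹ with hc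
  set K : Matrix (Fin n) (Fin n) ℝ := onesM n with hK
  have hsplit : Matrix.trace (Mᵀ * P)
      = c * Matrix.trace (Mᵀ * K) + Matrix.trace (Mᵀ * (V * Q * Vᵀ)) := by
    conv_lhs => rw [hdec]
    rw [Matrix.mul_add, Matrix.trace_add, Matrix.mul_smul, Matrix.trace_smul]
    rfl
  have htrK : Matrix.trace (Mᵀ * K) = ∑ i, ∑ j, M i j := by
    rw [trace_transpose_mul_eq, Finset.sum_comm]
    simp [hK]
  have htrQ : Matrix.trace (Mᵀ * (V * Q * Vᵀ)) = Matrix.trace ((Vᵀ * M * V)ᵀ * Q) := by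
    have e1 : Mᵀ * (V * Q * Vᵀ) = (Mᵀ * V * Q) * Vᵀ := by simp only [Matrix.mul_assoc]
    have e2 : (Vᵀ * M * V)ᵀ * Q = Vᵀ * (Mᵀ * V * Q) := by
      simp only [Matrix.transpose_mul, Matrix.transpose_transpose, Matrix.mul_assoc]
    rw [e1, e2, Matrix.trace_mul_comm]
  have hlow : -(traceNorm (Vᵀ * M * V)) ≤ Matrix.trace ((Vᵀ * M * V)ᵀ * Q) := by
    have hnegQ : (-Q)ᵀ * (-Q) = 1 := by
      rw [Matrix.transpose_neg, Matrix.neg_mul, Matrix.mul_neg, neg_neg, hQO]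
    have := vonNeumann (Vᵀ * M * V) (-Q) hnegQ
    rw [Matrix.mul_neg, Matrix.trace_neg] at this
    linarith
  have hkey : c * ((n:ℝ) * traceNorm (Vᵀ * M * V)) ≤ c * (∑ i, ∑ j, M i j) :=
    mul_le_mul_of_nonneg_left hM (le_of_lt (by rw [hc]; positivity))
  have hcn : c * (n:ℝ) = 1 := by rw [hc]; field_simp
  rw [← mul_assoc, hcn, one_mul] at hkey
  rw [hsplit, htrK, htrQ]
  linarith

/-- Frobenius bound for the quadratic term. -/
lemma quad_bound {n : ℕ} (C D : Matrix (Fin n) (Fin n) ℝ) (hC : C.IsSymm)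
    {P : Matrix (Fin n) (Fin n) ℝ} (hP : P ∈ OE n) :
    Matrix.trace (C * P * D * Pᵀ) ≤ (frobSq C + frobSq D) / 2 := by
  obtain ⟨hO, h1, h2⟩ := hP
  set X := P * D * Pᵀ with hX
  have e1 : C * P * D * Pᵀ = Cᵀ * X := by
    rw [hC.eq, hX]; simp only [Matrix.mul_assoc]
  have hfx : frobSq X = frobSq D := by
    rw [frobSq_eq_trace, frobSq_eq_trace]
    have e2 : Xᵀ * X = P * (Dᵀ * ((Pᵀ * P) * (D * Pᵀ))) := by
      rw [hX]; simp only [Matrix.transpose_mul, Matrix.transpose_transpose, Matrix.mul_assoc]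
    rw [e2, hO, Matrix.one_mul, Matrix.trace_mul_comm]
    have e3 : (Dᵀ * (D * Pᵀ)) * P = Dᵀ * (D * (Pᵀ * P)) := by simp only [Matrix.mul_assoc]
    rw [e3, hO, Matrix.mul_one]
  rw [e1]
  calc Matrix.trace (Cᵀ * X) ≤ (frobSq C + frobSq X) / 2 := frob_inner_le C X
    _ = (frobSq C + frobSq D) / 2 := by rw [hfx]

/-- If `1ᵀ M 1 ≥ n·‖M̂‖_*` then `OFGW(C,D,M;α) ≥ 0`; moreover, when `M = 0`,
`OFGW` degenerates to `α·OGW`. -/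
theorem OFGW_nonneg_and_degenerate (n : ℕ) (hn : 2 ≤ n)
    (α : ℝ) (hα0 : 0 ≤ α) (hα1 : α ≤ 1)
    (C D M : Matrix (Fin n) (Fin n) ℝ) (hC : C.IsSymm) (hD : D.IsSymm)
    (V : Matrix (Fin n) (Fin (n - 1)) ℝ)
    (hV1 : Vᵀ *ᵥ (fun _ => (1 : ℝ)) = 0) (hV2 : Vᵀ * V = 1) :
    ((n : ℝ) * traceNorm (Vᵀ * M * V) ≤ ∑ i, ∑ j, M i j → 0 ≤ OFGW n α C D M)
    ∧ OFGW n α C D 0 = α * OGW n C D := by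
  have hn0 : (0:ℝ) < (n:ℝ) := by
    have : 0 < n := by omega
    exact_mod_cast this
  constructor
  · intro hM
    have hsupb : sSup ((fun P => 2 * α * Matrix.trace (C * P * D * Pᵀ)
        - (1 - α) * Matrix.trace (Mᵀ * P)) '' (OE n)) ≤ α * (frobSq C + frobSq D) := by
      apply Real.sSup_le
      · rintro x ⟨P, hP, rfl⟩
        have hq := quad_bound C D hC hP
        have hm := trace_M_nonneg hn hV1 hV2 M hM hP
        dsimp only
        linarith [mul_nonneg hα0 (sub_nonneg.mpr hq),
          mul_nonneg (sub_nonneg.mpr hα1) hm]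
      · have := frobSq_nonneg C
        have := frobSq_nonneg D
        positivity
    rw [OFGW]
    have hrw : α / (n:ℝ)^2 * (frobSq C + frobSq D)
        = (1 / (n:ℝ)^2) * (α * (frobSq C + frobSq D)) := by ring
    rw [hrw, sub_nonneg]
    apply mul_le_mul_of_nonneg_left hsupb
    positivity
  · have himg : ((fun P => 2 * α * Matrix.trace (C * P * D * Pᵀ)
        - (1 - α) * Matrix.trace ((0 : Matrix (Fin n) (Fin n) ℝ)ᵀ * P)) '' (OE n))
        = (2 * α) • ((fun P => Matrix.trace (C * P * D * Pᵀ)) '' (OE n)) := by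
      rw [← Set.image_smul, ← Set.image_comp]
      apply Set.image_congr
      intro P _
      simp [Function.comp, smul_eq_mul]
    rw [OFGW, OGW, himg, Real.sSup_smul_of_nonneg (by positivity)]
    simp only [smul_eq_mul]
    ring
end
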